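/- Let n ∈ ℕ and k ≥ 1. Let c(z) = A z + b where A ∈ ℝ^{2n×2n} is block diagonal with 2×2 blocks of the form [[k_i a_i, a_i], [k_i a_i, a_i]] or [[a_i, k_i a_i], [a_i, k_i a_i]] with a_i ≥ 0 and 1 ≤ k_i ≤ k, and b ∈ ℝ^{2n} has nonnegative entries. Let X be a set of vectors in ℝ^{2n} with nonnegative entries, let z^EQ ∈ X satisfy ⟨c(z^EQ), z^EQ − z⟩ ≤ 0 for all z ∈ X, and let w ∈ ℝ^{2n} have nonnegative entries with (1 + k/4)^{-1} w ∈ X. Then ⟨c(z^EQ), z^EQ⟩ ≤ ⟨c(w), w⟩. -/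

import Mathlib

open Matrix

/-- Theorem 2(b) (bicriteria): for pairwise separable affine costs `c(z) = A z + b`
with maximum degree of asymmetry `k ≥ 1` and nonnegative `b`, the social cost of a
Wardrop equilibrium is at most that of any nonnegative `w` whose down-scaling
`(1 + k/4)⁻¹ w` is feasible. -/
theorem bicriteria_pairwise_separable (n : ℕ) (k : ℝ) (hk : 1 ≤ k)
    (a ki : Fin n → ℝ) (ha : ∀ i, 0 ≤ a i)
    (hki : ∀ i, 1 ≤ ki i ∧ ki i ≤ k)
    (B : Fin n → Matrix (Fin 2) (Fin 2) ℝ)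
    (hB : ∀ i, B i = !![ki i * a i, a i; ki i * a i, a i] ∨
               B i = !![a i, ki i * a i; a i, ki i * a i])
    (A : Matrix (Fin 2 × Fin n) (Fin 2 × Fin n) ℝ)
    (hA : A = Matrix.blockDiagonal B)
    (b : Fin 2 × Fin n → ℝ) (hb : ∀ j, 0 ≤ b j)
    (c : (Fin 2 × Fin n → ℝ) → (Fin 2 × Fin n → ℝ))
    (hc : ∀ z, c z = A *ᵥ z + b)
    (X : Set (Fin 2 × Fin n → ℝ)) (hX : ∀ z ∈ X, ∀ j, 0 ≤ z j)
    (zeq : Fin 2 × Fin n → ℝ) (hzeq : zeq ∈ X)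
    (hVI : ∀ z ∈ X, (c zeq) ⬝ᵥ (zeq - z) ≤ 0)
    (w : Fin 2 × Fin n → ℝ) (hw : ∀ j, 0 ≤ w j)
    (hwX : (1 + k / 4)⁻¹ • w ∈ X) :
    (c zeq) ⬝ᵥ zeq ≤ (c w) ⬝ᵥ w := by
  have hk4 : (0:ℝ) < 1 + k / 4 := by linarith
  set s : ℝ := (1 + k / 4)⁻¹ with hs
  have hs0 : 0 < s := inv_pos.mpr hk4
  -- the common row value of block i applied to z
  set L : (Fin 2 × Fin n → ℝ) → Fin n → ℝ :=
    fun z i => B i 0 0 * z (0, i) + B i 0 1 * z (1, i) with hL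
  -- rows of each block are equal
  have hrow : ∀ i (p q : Fin 2), B i p q = B i 0 q := by
    intro i p q
    rcases hB i with h | h <;> fin_cases p <;> fin_cases q <;> simp [h]
  -- mulVec of block diagonal
  have hmv : ∀ (z : Fin 2 × Fin n → ℝ) (p : Fin 2) (i : Fin n),
      (A *ᵥ z) (p, i) = L z i := by
    intro z p i
    rw [hA]
    simp only [Matrix.mulVec, dotProduct, Fintype.sum_prod_type,
      Matrix.blockDiagonal_apply]
    rw [Finset.sum_comm]
    simp [Fin.sum_univ_two, hrow i p]
    rfl
  have hdot : ∀ (z v : Fin 2 × Fin n → ℝ),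
      (A *ᵥ z) ⬝ᵥ v = ∑ i, L z i * (v (0, i) + v (1, i)) := by
    intro z v
    simp only [dotProduct, Fintype.sum_prod_type, Fin.sum_univ_two, hmv]
    rw [← Finset.sum_add_distrib]
    exact Finset.sum_congr rfl fun i _ => by ring
  have hzeqnn : ∀ j, 0 ≤ zeq j := hX zeq hzeq
  -- per-block inequality
  have hblock : ∀ i, (L zeq i - L w i) * (w (0, i) + w (1, i)) ≤
      k / 4 * (L zeq i * (zeq (0, i) + zeq (1, i))) := by
    intro i
    obtain ⟨hk1, hk2⟩ := hki i
    have hai := ha i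
    have hx := hzeqnn (0, i); have hy := hzeqnn (1, i)
    have hxw := hw (0, i); have hyw := hw (1, i)
    rcases hB i with h | h <;>
      simp [hL, h, Matrix.cons_val_zero, Matrix.cons_val_one, Matrix.head_cons] <;>
      nlinarith [mul_nonneg hai (sq_nonneg (ki i * zeq (0,i) + zeq (1,i) - 2*(w (0,i) + w (1,i)))),
        mul_nonneg hai (sq_nonneg (zeq (0,i) + ki i * zeq (1,i) - 2*(w (0,i) + w (1,i)))),
        mul_nonneg (mul_nonneg hai (add_nonneg (mul_nonneg (by linarith : (0:ℝ) ≤ ki i) hx) hy))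
          (by nlinarith : (0:ℝ) ≤ (k - ki i) * zeq (0,i) + (k - 1) * zeq (1,i)),
        mul_nonneg (mul_nonneg hai (add_nonneg hx (mul_nonneg (by linarith : (0:ℝ) ≤ ki i) hy)))
          (by nlinarith : (0:ℝ) ≤ (k - 1) * zeq (0,i) + (k - ki i) * zeq (1,i)),
        mul_nonneg (mul_nonneg hai (add_nonneg hxw hyw))
          (mul_nonneg (by linarith : (0:ℝ) ≤ ki i - 1) hxw),
        mul_nonneg (mul_nonneg hai (add_nonneg hxw hyw))
          (mul_nonneg (by linarith : (0:ℝ) ≤ ki i - 1) hyw)]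
  -- nonnegativity of b-terms
  have hbz : 0 ≤ b ⬝ᵥ zeq :=
    Finset.sum_nonneg fun j _ => mul_nonneg (hb j) (hzeqnn j)
  have hbw : 0 ≤ b ⬝ᵥ w :=
    Finset.sum_nonneg fun j _ => mul_nonneg (hb j) (hw j)
  -- the VI at the scaled flow
  have hvi := hVI _ hwX
  simp only [hc] at hvi ⊢
  have hexp : (A *ᵥ zeq + b) ⬝ᵥ (zeq - s • w)
      = (A *ᵥ zeq + b) ⬝ᵥ zeq - s * ((A *ᵥ zeq + b) ⬝ᵥ w) := by
    rw [dotProduct_sub, dotProduct_smul]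
    ring_nf
  rw [hexp] at hvi
  have hCe : (A *ᵥ zeq + b) ⬝ᵥ zeq ≤ s * ((A *ᵥ zeq + b) ⬝ᵥ w) := by linarith
  have h1 : (A *ᵥ zeq + b) ⬝ᵥ w ≤ (A *ᵥ w + b) ⬝ᵥ w
      + k / 4 * ((A *ᵥ zeq + b) ⬝ᵥ zeq) := by
    rw [add_dotProduct, add_dotProduct, add_dotProduct,
      hdot, hdot, hdot]
    have hsum : ∑ i, L zeq i * (w (0, i) + w (1, i))
        ≤ ∑ i, L w i * (w (0, i) + w (1, i))
          + k / 4 * ∑ i, L zeq i * (zeq (0, i) + zeq (1, i)) := by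
      have hss : ∑ i : Fin n, (L zeq i - L w i) * (w (0, i) + w (1, i))
          ≤ ∑ i : Fin n, k / 4 * (L zeq i * (zeq (0, i) + zeq (1, i))) :=
        Finset.sum_le_sum fun i _ => hblock i
      simp only [sub_mul, Finset.sum_sub_distrib] at hss
      rw [Finset.mul_sum]
      linarith [hss]
    nlinarith [mul_nonneg (by linarith : (0:ℝ) ≤ k/4) hbz]
  have hfin : (A *ᵥ zeq + b) ⬝ᵥ zeq
      ≤ s * ((A *ᵥ w + b) ⬝ᵥ w + k / 4 * ((A *ᵥ zeq + b) ⬝ᵥ zeq)) := by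
    calc (A *ᵥ zeq + b) ⬝ᵥ zeq ≤ s * ((A *ᵥ zeq + b) ⬝ᵥ w) := hCe
    _ ≤ _ := by
      apply mul_le_mul_of_nonneg_left h1 (le_of_lt hs0)
  have hmul : s * (1 + k / 4) = 1 := inv_mul_cancel₀ (ne_of_gt hk4)
  have h2 := mul_le_mul_of_nonneg_left hfin hk4.le
  have h3 : (1 + k / 4) * (s * ((A *ᵥ w + b) ⬝ᵥ w + k / 4 * ((A *ᵥ zeq + b) ⬝ᵥ zeq)))
      = (A *ᵥ w + b) ⬝ᵥ w + k / 4 * ((A *ᵥ zeq + b) ⬝ᵥ zeq) := by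
    rw [← mul_assoc, mul_comm (1 + k / 4) s, hmul, one_mul]
  rw [h3] at h2
  have h4 : (1 + k / 4) * ((A *ᵥ zeq + b) ⬝ᵥ zeq)
      = (A *ᵥ zeq + b) ⬝ᵥ zeq + k / 4 * ((A *ᵥ zeq + b) ⬝ᵥ zeq) := by ring
  linarith
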